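/- (Stability of subsolutions via relaxed upper limits.) For each n ≥ 1 and each i ∈ 𝓘 let v^{i,n} : ℝ^k → ℝ be continuous, with v^{i,n} ≤ v^{i,n+1} pointwise, with a uniform polynomial growth bound |v^{i,n}(x)| ≤ C(1 + |x|^γ) independent of n, and satisfying pointwise v^{i,n}(x) ≥ max_{j≠i}( v^{j,n−1}(x) − g_ij(x) ). Assume that for each n ≥ 1 the m-tuple (v^{1,n},…,v^{m,n}) is a viscosity subsolution of the decoupled system (S_n): for each i, min{ v^{i,n}(x) − max_{j≠i}( v^{j,n−1}(x) − g_ij(x) ), r v^{i,n}(x) − ⟨b(x), D_x v^{i,n}(x)⟩ − ½Tr[(σσᵀ)(x) D²_x v^{i,n}(x)] − f_i(x, v^{1,n−1}(x),…,v^{i−1,n−1}(x), v^{i,n}(x), v^{i+1,n−1}(x),…,v^{m,n−1}(x), σ(x)ᵀ D_x v^{i,n}(x)) } = 0. Define the relaxed upper limit v^{i,*}(x) = limsup_{n→∞, x′→x} v^{i,n}(x′). Then (v^{1,*},…,v^{m,*}) is a viscosity subsolution of the system (S). -/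

import Mathlib

open Filter Matrix

noncomputable section

abbrev Vec (n : ℕ) := Fin n → ℝ

/-- Euclidean norm on `Fin n → ℝ`. -/
def eucNorm {n : ℕ} (v : Vec n) : ℝ := Real.sqrt (∑ i, v i ^ 2)

/-- Euclidean inner product. -/
def dotp {n : ℕ} (u v : Vec n) : ℝ := ∑ i, u i * v i

/-- Quadratic form `⟨X v, v⟩`. -/
def quadForm {n : ℕ} (X : Matrix (Fin n) (Fin n) ℝ) (v : Vec n) : ℝ :=
  ∑ i, ∑ j, X i j * v i * v j

/-- Squared Frobenius norm. -/
def frobSq {n p : ℕ} (A : Matrix (Fin n) (Fin p) ℝ) : ℝ := ∑ i, ∑ j, A i j ^ 2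

/-- `(q, X)` belongs to the second-order subjet `J^{2,-} φ (x)`. -/
def InSubjet {n : ℕ} (φ : Vec n → ℝ) (x q : Vec n) (X : Matrix (Fin n) (Fin n) ℝ) : Prop :=
  X.IsSymm ∧ ∀ ε > (0:ℝ), ∀ᶠ y in nhds x,
    φ x + dotp q (y - x) + (1/2) * quadForm X (y - x) - ε * eucNorm (y - x) ^ 2 ≤ φ y

/-- `(q, X)` belongs to the second-order superjet `J^{2,+} φ (x)`. -/
def InSuperjet {n : ℕ} (φ : Vec n → ℝ) (x q : Vec n) (X : Matrix (Fin n) (Fin n) ℝ) : Prop :=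
  X.IsSymm ∧ ∀ ε > (0:ℝ), ∀ᶠ y in nhds x,
    φ y ≤ φ x + dotp q (y - x) + (1/2) * quadForm X (y - x) + ε * eucNorm (y - x) ^ 2

/-- Polynomial growth. -/
def PolyGrowth {n : ℕ} (φ : Vec n → ℝ) : Prop :=
  ∃ (C : ℝ) (γ : ℕ), ∀ x, |φ x| ≤ C * (1 + eucNorm x ^ γ)

/-- The switching obstacle `max_{j ≠ i} (v^j(x) - g_{ij}(x))`. -/
def obstacle {k m : ℕ} (g : Fin m → Fin m → Vec k → ℝ) (v : Fin m → Vec k → ℝ)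
    (i : Fin m) (x : Vec k) : ℝ :=
  ⨆ j : {j : Fin m // j ≠ i}, (v j x - g i j x)

/-- The second order term of the system, evaluated on a jet `(q, X)`. -/
def ham {k d m : ℕ} (r : ℝ) (b : Vec k → Vec k) (σ : Vec k → Matrix (Fin k) (Fin d) ℝ)
    (f : Fin m → Vec k → (Fin m → ℝ) → Vec d → ℝ) (v : Fin m → Vec k → ℝ)
    (i : Fin m) (x q : Vec k) (X : Matrix (Fin k) (Fin k) ℝ) : ℝ :=
  r * v i x - dotp (b x) q - (1/2) * Matrix.trace (σ x * (σ x)ᵀ * X)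
    - f i x (fun j => v j x) ((σ x)ᵀ.mulVec q)

def IsSupersolution {k d m : ℕ} (r : ℝ) (b : Vec k → Vec k)
    (σ : Vec k → Matrix (Fin k) (Fin d) ℝ)
    (f : Fin m → Vec k → (Fin m → ℝ) → Vec d → ℝ)
    (g : Fin m → Fin m → Vec k → ℝ) (v : Fin m → Vec k → ℝ) : Prop :=
  ∀ (i : Fin m) (x q : Vec k) (X : Matrix (Fin k) (Fin k) ℝ), InSubjet (v i) x q X →
    0 ≤ min (v i x - obstacle g v i x) (ham r b σ f v i x q X)

def IsSubsolution {k d m : ℕ} (r : ℝ) (b : Vec k → Vec k)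
    (σ : Vec k → Matrix (Fin k) (Fin d) ℝ)
    (f : Fin m → Vec k → (Fin m → ℝ) → Vec d → ℝ)
    (g : Fin m → Fin m → Vec k → ℝ) (v : Fin m → Vec k → ℝ) : Prop :=
  ∀ (i : Fin m) (x q : Vec k) (X : Matrix (Fin k) (Fin k) ℝ), InSuperjet (v i) x q X →
    min (v i x - obstacle g v i x) (ham r b σ f v i x q X) ≤ 0

/-- Gradient with respect to the standard basis. -/
def grad {k : ℕ} (φ : Vec k → ℝ) (x : Vec k) : Vec k :=
  fun i => fderiv ℝ φ x (Pi.single i 1)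

/-- Hessian matrix with respect to the standard basis. -/
def hess {k : ℕ} (φ : Vec k → ℝ) (x : Vec k) : Matrix (Fin k) (Fin k) ℝ :=
  fun i j => fderiv ℝ (fun y => fderiv ℝ φ y (Pi.single j 1)) x (Pi.single i 1)

/-- The infinitesimal generator `𝓛φ = ½ Tr[σσᵀ D²φ] + b · Dφ`. -/
def genL {k d : ℕ} (b : Vec k → Vec k) (σ : Vec k → Matrix (Fin k) (Fin d) ℝ)
    (φ : Vec k → ℝ) (x : Vec k) : ℝ :=
  (1/2) * Matrix.trace (σ x * (σ x)ᵀ * hess φ x) + dotp (b x) (grad φ x)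

/-- The structural assumptions on the data `b, σ, f, g` that do not involve second
derivatives of the switching costs: Lipschitz continuity and linear growth of the
coefficients, continuity, uniform Lipschitz continuity in `(y,z)` with constant `C`,
polynomial growth and monotonicity of the generators, and nonnegativity, continuity
and polynomial growth of the switching costs. -/
def CoreAssumptions {k d m : ℕ} (b : Vec k → Vec k)
    (σ : Vec k → Matrix (Fin k) (Fin d) ℝ)
    (f : Fin m → Vec k → (Fin m → ℝ) → Vec d → ℝ)
    (g : Fin m → Fin m → Vec k → ℝ) (C : ℝ) : Prop :=
  (∃ Cb : ℝ, ∀ x y : Vec k, eucNorm (b x - b y) ≤ Cb * eucNorm (x - y) ∧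
      Real.sqrt (frobSq (σ x - σ y)) ≤ Cb * eucNorm (x - y)) ∧
  (∃ Cb : ℝ, ∀ x : Vec k, eucNorm (b x) ≤ Cb * (1 + eucNorm x) ∧
      Real.sqrt (frobSq (σ x)) ≤ Cb * (1 + eucNorm x)) ∧
  (∀ i, Continuous fun p : Vec k × (Fin m → ℝ) × Vec d => f i p.1 p.2.1 p.2.2) ∧
  (∀ i (x : Vec k) (y y' : Fin m → ℝ) (z z' : Vec d),
      |f i x y z - f i x y' z'| ≤ C * (eucNorm (y - y') + eucNorm (z - z'))) ∧
  (∀ i, PolyGrowth fun x => f i x 0 0) ∧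
  (∀ i j, j ≠ i → ∀ (x : Vec k) (z : Vec d) (y : Fin m → ℝ) (t t' : ℝ), t ≤ t' →
      f i x (Function.update y j t) z ≤ f i x (Function.update y j t') z) ∧
  (∀ i j x, 0 ≤ g i j x) ∧
  (∀ i x, g i i x = 0) ∧
  (∀ i j, Continuous (g i j)) ∧
  (∀ i j, PolyGrowth (g i j))

/-- The non-free-loop condition on the switching costs. -/
def NonFreeLoop {k m : ℕ} (g : Fin m → Fin m → Vec k → ℝ) : Prop :=
  ∀ (N : ℕ) (ι : ℕ → Fin m), 2 ≤ N → ι 0 ≠ ι 1 → ι 0 = ι (N - 1) →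
    (Finset.image ι (Finset.range N)).card = N - 1 →
    ∀ x : Vec k, 0 < ∑ l ∈ Finset.range (N - 1), g (ι l) (ι (l + 1)) x

/-- The full standing assumptions: the core assumptions, smoothness of the switching
costs with `𝓛 g_{ij} ≤ 0`, and the non-free-loop condition. -/
def DataAssumptions {k d m : ℕ} (b : Vec k → Vec k)
    (σ : Vec k → Matrix (Fin k) (Fin d) ℝ)
    (f : Fin m → Vec k → (Fin m → ℝ) → Vec d → ℝ)
    (g : Fin m → Fin m → Vec k → ℝ) (C : ℝ) : Prop :=
  CoreAssumptions b σ f g C ∧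
  (∀ i j, ContDiff ℝ 2 (g i j)) ∧
  (∀ i j x, genL b σ (g i j) x ≤ 0) ∧
  NonFreeLoop g

section MyHelpers

variable {n : ℕ}

private lemma eucNorm_nonneg' (v : Vec n) : 0 ≤ eucNorm v := Real.sqrt_nonneg _

private lemma eucNorm_sq' (v : Vec n) : eucNorm v ^ 2 = ∑ i, v i ^ 2 := by
  rw [eucNorm, Real.sq_sqrt (by positivity)]

private lemma abs_le_eucNorm' (v : Vec n) (i : Fin n) : |v i| ≤ eucNorm v := by
  rw [eucNorm, ← Real.sqrt_sq_eq_abs]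
  exact Real.sqrt_le_sqrt
    (Finset.single_le_sum (f := fun j => v j ^ 2) (fun j _ => sq_nonneg _) (Finset.mem_univ i))

private lemma eucNorm_le' (v : Vec n) : eucNorm v ≤ Real.sqrt n * ‖v‖ := by
  rw [eucNorm]
  have h1 : ∑ i, v i ^ 2 ≤ (n : ℝ) * ‖v‖ ^ 2 := by
    have : ∀ i : Fin n, v i ^ 2 ≤ ‖v‖ ^ 2 := by
      intro i
      have h0 : |v i| ≤ ‖v‖ := by
        have := norm_le_pi_norm v i; rwa [Real.norm_eq_abs] at this
      nlinarith [abs_nonneg (v i), sq_abs (v i)]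
    calc ∑ i, v i ^ 2 ≤ ∑ _i : Fin n, ‖v‖ ^ 2 := Finset.sum_le_sum fun i _ => this i
      _ = (n : ℝ) * ‖v‖ ^ 2 := by simp [Finset.sum_const, Finset.card_univ]
  calc Real.sqrt (∑ i, v i ^ 2) ≤ Real.sqrt ((n : ℝ) * ‖v‖ ^ 2) := Real.sqrt_le_sqrt h1
    _ = Real.sqrt n * ‖v‖ := by
        rw [Real.sqrt_mul (by positivity), Real.sqrt_sq (norm_nonneg _)]

private lemma dotp_add_right (q u v : Vec n) : dotp q (u + v) = dotp q u + dotp q v := by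
  simp [dotp, mul_add, Finset.sum_add_distrib]

private lemma dotp_zero_right (q : Vec n) : dotp q 0 = 0 := by simp [dotp]

private lemma quadForm_add' (X Y : Matrix (Fin n) (Fin n) ℝ) (v : Vec n) :
    quadForm (X + Y) v = quadForm X v + quadForm Y v := by
  simp [quadForm, Matrix.add_apply, add_mul, Finset.sum_add_distrib]

private lemma quadForm_smul' (c : ℝ) (X : Matrix (Fin n) (Fin n) ℝ) (v : Vec n) :
    quadForm (c • X) v = c * quadForm X v := by
  simp [quadForm, Matrix.smul_apply, Finset.mul_sum, mul_assoc]

private lemma quadForm_one' (v : Vec n) : quadForm (1 : Matrix (Fin n) (Fin n) ℝ) v = ∑ i, v i ^ 2 := by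
  unfold quadForm
  refine Finset.sum_congr rfl fun i _ => ?_
  rw [Finset.sum_eq_single i]
  · simp [Matrix.one_apply_eq, sq]
  · intro j _ hj; simp [Matrix.one_apply_ne' hj]
  · simp

private lemma quadForm_zero_right (X : Matrix (Fin n) (Fin n) ℝ) :
    quadForm X (0 : Vec n) = 0 := by simp [quadForm]

private lemma quadForm_expand' {X : Matrix (Fin n) (Fin n) ℝ} (hX : X.IsSymm) (a h : Vec n) :
    quadForm X (a + h) = quadForm X a + 2 * dotp (X.mulVec a) h + quadForm X h := by
  have hsym : ∀ i j, X j i = X i j := fun i j => hX.apply i j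
  have key : ∑ i, ∑ j, X i j * a i * h j = ∑ i, ∑ j, X i j * a j * h i := by
    rw [Finset.sum_comm]
    refine Finset.sum_congr rfl fun i _ => Finset.sum_congr rfl fun j _ => ?_
    rw [hsym j i]
  have hmv : dotp (X.mulVec a) h = ∑ i, ∑ j, X i j * a j * h i := by
    simp [dotp, Matrix.mulVec, dotProduct, Finset.sum_mul]
  simp only [quadForm, Pi.add_apply]
  have e1 : ∑ i, ∑ j, X i j * (a i + h i) * (a j + h j)
      = (∑ i, ∑ j, X i j * a i * a j) + (∑ i, ∑ j, X i j * a i * h j)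
        + ((∑ i, ∑ j, X i j * h i * a j) + (∑ i, ∑ j, X i j * h i * h j)) := by
    rw [← Finset.sum_add_distrib, ← Finset.sum_add_distrib, ← Finset.sum_add_distrib]
    refine Finset.sum_congr rfl fun i _ => ?_
    rw [← Finset.sum_add_distrib, ← Finset.sum_add_distrib, ← Finset.sum_add_distrib]
    exact Finset.sum_congr rfl fun j _ => by ring
  have e2 : ∑ i, ∑ j, X i j * h i * a j = ∑ i, ∑ j, X i j * a j * h i :=
    Finset.sum_congr rfl fun i _ => Finset.sum_congr rfl fun j _ => by ring
  rw [e1, e2, key, hmv]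
  ring


private lemma psi_shift' {X : Matrix (Fin n) (Fin n) ℝ} (hX : X.IsSymm) (q x y₀ y : Vec n)
    (c0 : ℝ) :
    c0 + dotp q (y - x) + (1/2) * quadForm X (y - x)
      = (c0 + dotp q (y₀ - x) + (1/2) * quadForm X (y₀ - x))
        + dotp (q + X.mulVec (y₀ - x)) (y - y₀) + (1/2) * quadForm X (y - y₀) := by
  have hd : y - x = (y₀ - x) + (y - y₀) := by abel
  have hq : dotp (q + X.mulVec (y₀ - x)) (y - y₀)
      = dotp q (y - y₀) + dotp (X.mulVec (y₀ - x)) (y - y₀) := by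
    simp [dotp, add_mul, Finset.sum_add_distrib]
  rw [hd, quadForm_expand' hX, dotp_add_right, hq]
  ring

private lemma entry_abs_le_frob {p : ℕ} (A : Matrix (Fin n) (Fin p) ℝ) (i : Fin n) (j : Fin p) :
    |A i j| ≤ Real.sqrt (frobSq A) := by
  rw [← Real.sqrt_sq_eq_abs]
  apply Real.sqrt_le_sqrt
  calc A i j ^ 2 ≤ ∑ j', A i j' ^ 2 :=
        Finset.single_le_sum (f := fun j' => A i j' ^ 2) (fun _ _ => sq_nonneg _)
          (Finset.mem_univ j)
    _ ≤ ∑ i', ∑ j', A i' j' ^ 2 :=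
        Finset.single_le_sum (f := fun i' => ∑ j', A i' j' ^ 2)
          (fun _ _ => Finset.sum_nonneg fun _ _ => sq_nonneg _) (Finset.mem_univ i)

private lemma continuous_of_abs_lip {k : ℕ} {G : Vec k → ℝ} {c : ℝ}
    (h : ∀ x y, |G x - G y| ≤ c * eucNorm (x - y)) : Continuous G := by
  have key : ∀ x y : Vec k, dist (G x) (G y) ≤ (max c 0 * Real.sqrt k) * dist x y := by
    intro x y
    have h1 : |G x - G y| ≤ max c 0 * eucNorm (x - y) := by
      refine (h x y).trans (mul_le_mul_of_nonneg_right (le_max_left _ _) (eucNorm_nonneg' _))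
    have h2 : eucNorm (x - y) ≤ Real.sqrt k * ‖x - y‖ := eucNorm_le' _
    have h3 : max c 0 * eucNorm (x - y) ≤ max c 0 * (Real.sqrt k * ‖x - y‖) :=
      mul_le_mul_of_nonneg_left h2 (le_max_right _ _)
    rw [Real.dist_eq, dist_eq_norm]
    nlinarith [Real.sqrt_nonneg (k : ℝ), norm_nonneg (x - y)]
  exact (LipschitzWith.of_dist_le_mul (K := Real.toNNReal (max c 0 * Real.sqrt k))
    (fun x y => by
      refine (key x y).trans (mul_le_mul_of_nonneg_right ?_ dist_nonneg)
      rw [Real.coe_toNNReal _ (by positivity)])).continuous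

private lemma continuous_dotp_left {k : ℕ} (q : Vec k) : Continuous fun v : Vec k => dotp q v :=
  continuous_finset_sum _ fun i _ => continuous_const.mul (continuous_apply i)

private lemma continuous_quadForm {k : ℕ} (X : Matrix (Fin k) (Fin k) ℝ) :
    Continuous fun v : Vec k => quadForm X v :=
  continuous_finset_sum _ fun i _ => continuous_finset_sum _ fun j _ =>
    (continuous_const.mul (continuous_apply i)).mul (continuous_apply j)

private lemma trace_mul_transpose_nonneg {k d : ℕ} (A : Matrix (Fin k) (Fin d) ℝ) :
    0 ≤ Matrix.trace (A * Aᵀ) := by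
  rw [Matrix.trace]
  refine Finset.sum_nonneg fun i _ => ?_
  rw [Matrix.diag_apply, Matrix.mul_apply]
  exact Finset.sum_nonneg fun j _ => by rw [Matrix.transpose_apply]; exact mul_self_nonneg _

private lemma trace_mul_add_smul_one {k : ℕ} (S X : Matrix (Fin k) (Fin k) ℝ) (c : ℝ) :
    Matrix.trace (S * (X + c • 1)) = Matrix.trace (S * X) + c * Matrix.trace S := by
  rw [mul_add, Matrix.trace_add, mul_smul_comm, Matrix.trace_smul, mul_one]
  simp

private lemma update_mono_le {m : ℕ} {F : (Fin m → ℝ) → ℝ} {i : Fin m}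
    (hmono : ∀ j, j ≠ i → ∀ (y : Fin m → ℝ) (t t' : ℝ), t ≤ t' →
      F (Function.update y j t) ≤ F (Function.update y j t'))
    {u w : Fin m → ℝ} (huw : ∀ j, u j ≤ w j) (hui : u i = w i) : F u ≤ F w := by
  have key : ∀ s : Finset (Fin m), F u ≤ F (fun j => if j ∈ s then w j else u j) := by
    intro s
    induction s using Finset.induction_on with
    | empty => simp
    | @insert a s ha ih =>
      by_cases hai : a = i
      · have heq : (fun j => if j ∈ insert a s then w j else u j)
            = (fun j => if j ∈ s then w j else u j) := by
          funext j
          by_cases hj : j = a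
          · subst hj; subst hai; simp [ha, hui.symm]
          · simp [Finset.mem_insert, hj]
        rw [heq]; exact ih
      · have h1 : (fun j => if j ∈ insert a s then w j else u j)
            = Function.update (fun j => if j ∈ s then w j else u j) a (w a) := by
          funext j
          by_cases hj : j = a
          · subst hj; simp [ha]
          · simp [Function.update_of_ne hj, Finset.mem_insert, hj]
        have h2 : (fun j => if j ∈ s then w j else u j)
            = Function.update (fun j => if j ∈ s then w j else u j) a (u a) := by
          funext j
          by_cases hj : j = a
          · subst hj; simp [ha]
          · simp [Function.update_of_ne hj]
        calc F u ≤ F (fun j => if j ∈ s then w j else u j) := ih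
          _ = F (Function.update (fun j => if j ∈ s then w j else u j) a (u a)) := by rw [← h2]
          _ ≤ F (Function.update (fun j => if j ∈ s then w j else u j) a (w a)) :=
              hmono a hai _ _ _ (huw a)
          _ = F (fun j => if j ∈ insert a s then w j else u j) := by rw [h1]
  have h := key Finset.univ
  simpa using h

end MyHelpers

set_option maxHeartbeats 1000000 in
/-- **Stability of subsolutions via relaxed upper limits.**
If for every `n ≥ 1` the tuple `(v^{1,n},…,v^{m,n})` of continuous functions, increasing
in `n`, uniformly of polynomial growth and pointwise above the frozen obstacle, is a
viscosity subsolution of the decoupled system `(S_n)`, then the relaxed upper limit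
`v^{i,*}(x) = limsup_{n → ∞, x' → x} v^{i,n}(x')` is a viscosity subsolution of the
fully coupled system `(S)`. -/
theorem statement10 {k d m : ℕ} (hk : 1 ≤ k) (hd : 1 ≤ d) (hm : 2 ≤ m)
    (r : ℝ) (hr : 0 < r)
    (b : Vec k → Vec k) (σ : Vec k → Matrix (Fin k) (Fin d) ℝ)
    (f : Fin m → Vec k → (Fin m → ℝ) → Vec d → ℝ)
    (g : Fin m → Fin m → Vec k → ℝ) (C : ℝ) (hC : 0 ≤ C)
    (hcore : CoreAssumptions b σ f g C)
    (vseq : ℕ → Fin m → Vec k → ℝ) (Cv : ℝ) (γ : ℕ)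
    (hcont : ∀ n i, Continuous (vseq n i))
    (hmono : ∀ n i x, vseq n i x ≤ vseq (n + 1) i x)
    (hbdd : ∀ n i x, |vseq n i x| ≤ Cv * (1 + eucNorm x ^ γ))
    (hobst : ∀ n : ℕ, 1 ≤ n → ∀ (i j : Fin m) (x : Vec k), j ≠ i →
      vseq (n - 1) j x - g i j x ≤ vseq n i x)
    (hsubn : ∀ n : ℕ, 1 ≤ n →
      ∀ (i : Fin m) (x q : Vec k) (X : Matrix (Fin k) (Fin k) ℝ),
        InSuperjet (vseq n i) x q X →
        min (vseq n i x - ⨆ j : {j : Fin m // j ≠ i}, (vseq (n - 1) j x - g i j x))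
          (r * vseq n i x - dotp (b x) q - (1/2) * Matrix.trace (σ x * (σ x)ᵀ * X)
            - f i x (Function.update (fun l => vseq (n - 1) l x) i (vseq n i x))
                ((σ x)ᵀ.mulVec q)) ≤ 0) :
    IsSubsolution r b σ f g
      (fun i x => limsup (fun p : ℕ × Vec k => vseq p.1 i p.2) (atTop ×ˢ nhds x)) := by
  classical
  obtain ⟨hlip, hgrow, hfc, hflip, hfpoly, hfmono, hgnn, hgzero, hgc, hgpoly⟩ := hcore
  obtain ⟨Cb, hCb⟩ := hlip
  -- continuity of the coefficients
  have hbcont : Continuous b := by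
    refine continuous_pi fun t => continuous_of_abs_lip (c := Cb) fun x y => ?_
    have h1 : |(b x - b y) t| ≤ eucNorm (b x - b y) := abs_le_eucNorm' _ t
    have h2 := (hCb x y).1
    simpa [Pi.sub_apply] using h1.trans h2
  have hscont : Continuous σ := by
    refine continuous_matrix fun i j => continuous_of_abs_lip (c := Cb) fun x y => ?_
    have h1 : |(σ x - σ y) i j| ≤ Real.sqrt (frobSq (σ x - σ y)) := entry_abs_le_frob _ i j
    have h2 := (hCb x y).2
    simpa [Matrix.sub_apply] using h1.trans h2
  have hCv : 0 ≤ Cv := by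
    have h := (abs_nonneg _).trans (hbdd 0 ⟨0, by omega⟩ 0)
    nlinarith [pow_nonneg (eucNorm_nonneg' (0 : Vec k)) γ]
  -- uniform bound on closed balls
  have hbig : ∀ (xh : Vec k) (ρ : ℝ), 0 ≤ ρ → ∀ (n : ℕ) (j : Fin m), ∀ z : Vec k,
      z ∈ Metric.closedBall xh ρ → |vseq n j z| ≤ Cv * (1 + (Real.sqrt k * (‖xh‖ + ρ)) ^ γ) := by
    intro xh ρ hρ n j z hz
    have hd1 : ‖z - xh‖ ≤ ρ := by rwa [Metric.mem_closedBall, dist_eq_norm] at hz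
    have h1 : ‖z‖ ≤ ‖xh‖ + ρ := by
      have := norm_sub_norm_le z xh
      linarith
    have h2 : eucNorm z ≤ Real.sqrt k * (‖xh‖ + ρ) :=
      (eucNorm_le' z).trans (mul_le_mul_of_nonneg_left h1 (Real.sqrt_nonneg _))
    have h3 : eucNorm z ^ γ ≤ (Real.sqrt k * (‖xh‖ + ρ)) ^ γ :=
      pow_le_pow_left₀ (eucNorm_nonneg' z) h2 γ
    refine (hbdd n j z).trans ?_
    have := mul_le_mul_of_nonneg_left
      (show 1 + eucNorm z ^ γ ≤ 1 + (Real.sqrt k * (‖xh‖ + ρ)) ^ γ by linarith) hCv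
    linarith
  have hne : ∀ xh : Vec k, ((atTop : Filter ℕ) ×ˢ nhds xh).NeBot := fun xh => by infer_instance
  have hBdd : ∀ (j : Fin m) (xh : Vec k),
      IsBoundedUnder (· ≤ ·) ((atTop : Filter ℕ) ×ˢ nhds xh)
        (fun p : ℕ × Vec k => vseq p.1 j p.2) := by
    intro j xh
    refine isBoundedUnder_of_eventually_le (a := Cv * (1 + (Real.sqrt k * (‖xh‖ + 1)) ^ γ)) ?_
    have hev : ∀ᶠ z in nhds xh, z ∈ Metric.closedBall xh 1 :=
      Filter.eventually_of_mem (Metric.closedBall_mem_nhds xh one_pos) fun z hz => hz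
    exact (hev.prod_inr atTop).mono fun p hp => (abs_le.mp (hbig xh 1 one_pos.le p.1 j p.2 hp)).2
  have hCob : ∀ (j : Fin m) (xh : Vec k),
      IsCoboundedUnder (· ≤ ·) ((atTop : Filter ℕ) ×ˢ nhds xh)
        (fun p : ℕ × Vec k => vseq p.1 j p.2) := by
    intro j xh
    haveI := hne xh
    refine IsBoundedUnder.isCoboundedUnder_le ?_
    refine isBoundedUnder_of_eventually_ge (a := -(Cv * (1 + (Real.sqrt k * (‖xh‖ + 1)) ^ γ))) ?_
    have hev : ∀ᶠ z in nhds xh, z ∈ Metric.closedBall xh 1 :=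
      Filter.eventually_of_mem (Metric.closedBall_mem_nhds xh one_pos) fun z hz => hz
    exact (hev.prod_inr atTop).mono fun p hp => by
      have := (abs_le.mp (hbig xh 1 one_pos.le p.1 j p.2 hp)).1; linarith
  have hseqle : ∀ (j : Fin m) (xh : Vec k) (u : ℕ → ℕ) (z : ℕ → Vec k) (L : ℝ),
      Tendsto u atTop atTop → Tendsto z atTop (nhds xh) →
      Tendsto (fun l => vseq (u l) j (z l)) atTop (nhds L) →
      L ≤ limsup (fun p : ℕ × Vec k => vseq p.1 j p.2) ((atTop : Filter ℕ) ×ˢ nhds xh) := by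
    intro j xh u z L hu hz hL
    refine le_of_forall_pos_le_add fun η hη => ?_
    have hlt : limsup (fun p : ℕ × Vec k => vseq p.1 j p.2) ((atTop : Filter ℕ) ×ˢ nhds xh)
        < limsup (fun p : ℕ × Vec k => vseq p.1 j p.2) ((atTop : Filter ℕ) ×ˢ nhds xh) + η :=
      lt_add_of_pos_right _ hη
    have hev := eventually_lt_of_limsup_lt hlt (hBdd j xh)
    have hten : Tendsto (fun l => (u l, z l)) atTop ((atTop : Filter ℕ) ×ˢ nhds xh) :=
      hu.prodMk hz
    exact le_of_tendsto hL ((hten.eventually hev).mono fun l h => h.le)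
  set W : Fin m → Vec k → ℝ :=
      fun j y => limsup (fun p : ℕ × Vec k => vseq p.1 j p.2) ((atTop : Filter ℕ) ×ˢ nhds y)
    with hWdef
  have hWx : ∀ (j : Fin m) (xh : Vec k),
      W j xh = limsup (fun p : ℕ × Vec k => vseq p.1 j p.2) ((atTop : Filter ℕ) ×ˢ nhds xh) := by
    intro j xh; simp only [hWdef]
  intro i x q X hjet
  haveI hnei : Nonempty {j : Fin m // j ≠ i} := by
    obtain ⟨j, hj⟩ := Fintype.exists_ne_of_one_lt_card (by simp; omega) i
    exact ⟨⟨j, hj⟩⟩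
  set T := Matrix.trace (σ x * (σ x)ᵀ) with hT
  have hT0 : 0 ≤ T := trace_mul_transpose_nonneg _
  have main : ∀ ε₀ : ℝ, 0 < ε₀ →
      min (W i x - obstacle g W i x) (ham r b σ f W i x q X) ≤ ε₀ * (2 * T + 1) := by
    intro ε₀ hε₀
    set X' : Matrix (Fin k) (Fin k) ℝ := X + (4 * ε₀) • 1 with hX'
    have hX'symm : X'.IsSymm := by
      unfold Matrix.IsSymm
      rw [hX', Matrix.transpose_add, Matrix.transpose_smul, Matrix.transpose_one, hjet.1]
    obtain ⟨δ₀, hδ₀, hsj⟩ := Metric.eventually_nhds_iff.mp (hjet.2 ε₀ hε₀)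
    set δ := δ₀ / 2 with hδdef
    have hδpos : 0 < δ := by positivity
    set K := Metric.closedBall x δ with hK
    have hKx : x ∈ K := Metric.mem_closedBall_self hδpos.le
    have hKc : IsCompact K := isCompact_closedBall x δ
    have hKsub : ∀ z ∈ K, dist z x < δ₀ := fun z hz => by
      rw [hK, Metric.mem_closedBall] at hz; rw [hδdef] at hz; linarith
    set ψ : Vec k → ℝ := fun y' => W i x + dotp q (y' - x) + (1/2) * quadForm X' (y' - x)
      with hψ
    have hψx : ψ x = W i x := by
      simp only [hψ, sub_self, dotp_zero_right, quadForm_zero_right]; ring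
    have hψcont : Continuous ψ := by
      refine (continuous_const.add ((continuous_dotp_left q).comp
        (continuous_id.sub continuous_const))).add
        (continuous_const.mul ((continuous_quadForm X').comp
          (continuous_id.sub continuous_const)))
    have hsj' : ∀ z ∈ K, W i z ≤ ψ z - ε₀ * ∑ t, (z - x) t ^ 2 := by
      intro z hz
      have h1 := hsj (hKsub z hz)
      have h2 : quadForm X' (z - x) = quadForm X (z - x) + 4 * ε₀ * ∑ t, (z - x) t ^ 2 := by
        rw [hX', quadForm_add', quadForm_smul', quadForm_one']
      have h3 : eucNorm (z - x) ^ 2 = ∑ t, (z - x) t ^ 2 := eucNorm_sq' _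
      rw [h3] at h1
      simp only [hψ]
      rw [h2]
      linarith
    -- maximizers over K
    have hex : ∀ n : ℕ, ∃ y' ∈ K, IsMaxOn (fun z => vseq n i z - ψ z) K y' := fun n =>
      hKc.exists_isMaxOn ⟨x, hKx⟩ (((hcont n i).sub hψcont).continuousOn)
    choose y hyK hymax0 using hex
    have hymax : ∀ (n : ℕ), ∀ z ∈ K, vseq n i z - ψ z ≤ vseq n i (y n) - ψ (y n) :=
      fun n z hz => (isMaxOn_iff.mp (hymax0 n)) z hz
    set M : ℕ → ℝ := fun n => vseq n i (y n) - ψ (y n) with hM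
    have hMmono : Monotone M := by
      refine monotone_nat_of_le_succ fun n => ?_
      have h1 : vseq n i (y n) - ψ (y n) ≤ vseq (n+1) i (y n) - ψ (y n) := by
        have := hmono n i (y n); linarith
      exact h1.trans (hymax (n+1) (y n) (hyK n))
    set BK : ℝ := Cv * (1 + (Real.sqrt k * (‖x‖ + δ)) ^ γ) with hBK
    have hBK0 : 0 ≤ BK := mul_nonneg hCv (by positivity)
    have hvK : ∀ (n : ℕ) (j : Fin m), ∀ z ∈ K, |vseq n j z| ≤ BK :=
      fun n j z hz => hbig x δ hδpos.le n j z hz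
    obtain ⟨Cψ, hCψ⟩ : ∃ Cψ, ∀ z ∈ K, -ψ z ≤ Cψ := by
      obtain ⟨c, hc⟩ := hKc.bddAbove_image ((continuous_neg.comp hψcont).continuousOn)
      exact ⟨c, fun z hz => hc ⟨z, hz, rfl⟩⟩
    have hMbddA : BddAbove (Set.range M) := by
      refine ⟨BK + Cψ, fun w hw => ?_⟩
      obtain ⟨n, rfl⟩ := hw
      have h1 := (abs_le.mp (hvK n i (y n) (hyK n))).2
      have h2 := hCψ (y n) (hyK n)
      simp only [hM]; linarith
    set Minf := ⨆ n, M n with hMinf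
    have hMtend : Tendsto M atTop (nhds Minf) := tendsto_atTop_ciSup hMmono hMbddA
    have hMle : ∀ n, M n ≤ Minf := fun n => le_ciSup hMbddA n
    -- Claim 1 : 0 ≤ Minf
    have h0M : 0 ≤ Minf := by
      have hkey : ∀ η : ℝ, 0 < η → -(2*η) ≤ Minf := by
        intro η hη
        haveI := hne x
        have hlt : W i x - η
            < limsup (fun p : ℕ × Vec k => vseq p.1 i p.2) ((atTop : Filter ℕ) ×ˢ nhds x) := by
          rw [← hWx i x]; linarith
        have hfr := frequently_lt_of_lt_limsup (hCob i x) hlt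
        have hev1 : ∀ᶠ z in nhds x, z ∈ K :=
          Filter.eventually_of_mem (Metric.closedBall_mem_nhds x hδpos) fun z hz => hz
        have hev2 : ∀ᶠ z in nhds x, ψ z < W i x + η :=
          Filter.Tendsto.eventually_lt_const (by rw [hψx]; linarith) (hψcont.tendsto x)
        have hev := (hev1.and hev2).prod_inr (atTop : Filter ℕ)
        obtain ⟨p, hp1, hp2, hp3⟩ := (hfr.and_eventually hev).exists
        have h4 : vseq p.1 i p.2 - ψ p.2 ≤ M p.1 := hymax p.1 p.2 hp2
        have h5 := hMle p.1
        linarith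
      by_contra hcc
      push_neg at hcc
      have := hkey (-Minf/4) (by linarith)
      linarith
    -- compactness extraction
    set Z : ℕ → Vec k × (Fin m → ℝ) := fun n => (y n, fun j => vseq (n - 1) j (y n)) with hZ
    have hZmem : ∀ n, Z n ∈ K ×ˢ Metric.closedBall (0 : Fin m → ℝ) BK := by
      intro n
      refine ⟨hyK n, ?_⟩
      rw [Metric.mem_closedBall, dist_zero_right]
      refine (pi_norm_le_iff_of_nonneg hBK0).mpr fun j => ?_
      rw [Real.norm_eq_abs]
      exact hvK (n-1) j (y n) (hyK n)
    obtain ⟨⟨yh, β⟩, hmemP, φ, hφ, hφt⟩ :=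
      (hKc.prod (isCompact_closedBall (0 : Fin m → ℝ) BK)).tendsto_subseq hZmem
    have hyhK : yh ∈ K := hmemP.1
    have hφatTop : Tendsto φ atTop atTop := hφ.tendsto_atTop
    have hTY : Tendsto (fun l => y (φ l)) atTop (nhds yh) := by
      have h := (continuous_fst.tendsto (yh, β)).comp hφt
      exact h
    have hTU : Tendsto (fun l => (fun j => vseq (φ l - 1) j (y (φ l)))) atTop (nhds β) := by
      have h := (continuous_snd.tendsto (yh, β)).comp hφt
      exact h
    -- Claim 2 : yh = x
    have hA'tend : Tendsto (fun l => vseq (φ l) i (y (φ l))) atTop (nhds (Minf + ψ yh)) := by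
      have h1 : Tendsto (fun l => M (φ l)) atTop (nhds Minf) := hMtend.comp hφatTop
      have h2 : Tendsto (fun l => ψ (y (φ l))) atTop (nhds (ψ yh)) := (hψcont.tendsto yh).comp hTY
      refine (h1.add h2).congr fun l => ?_
      simp only [hM]; ring
    have hle1 : Minf + ψ yh ≤ W i yh := by
      rw [hWx i yh]
      exact hseqle i yh φ (fun l => y (φ l)) _ hφatTop hTY hA'tend
    set S := ∑ t, (yh - x) t ^ 2 with hS
    have hle2 : W i yh ≤ ψ yh - ε₀ * S := hsj' yh hyhK
    have hS0 : 0 ≤ S := Finset.sum_nonneg fun _ _ => sq_nonneg _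
    have hεS : ε₀ * S ≤ 0 := by linarith
    have hSz : S = 0 := le_antisymm (by nlinarith) hS0
    have hMinf0 : Minf = 0 := le_antisymm (by nlinarith) h0M
    have hyhx : yh = x := by
      funext t
      have h := (Finset.sum_eq_zero_iff_of_nonneg
        (fun t _ => sq_nonneg ((yh - x) t))).mp hSz t (Finset.mem_univ t)
      have h2 : (yh - x) t = 0 := by
        have := sq_eq_zero_iff.mp h; exact this
      have h3 : yh t - x t = 0 := by simpa [Pi.sub_apply] using h2
      linarith
    rw [hyhx] at hTY hA'tend
    rw [hMinf0, hψx, zero_add] at hA'tend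
    -- β bounds
    have hβle : ∀ j : Fin m, β j ≤ W j x := by
      intro j
      rw [hWx j x]
      refine hseqle j x (fun l => φ l - 1) (fun l => y (φ l)) (β j) ?_ hTY ?_
      · exact tendsto_atTop_mono (fun l => Nat.sub_le_sub_right hφ.le_apply 1)
          (tendsto_sub_atTop_nat 1)
      · exact (tendsto_pi_nhds.mp hTU j)
    -- case split on whether the obstacle is active frequently
    by_cases hcase : ∃ᶠ l in atTop, vseq (φ l) i (y (φ l)) -
        (⨆ j : {j : Fin m // j ≠ i},
          (vseq (φ l - 1) j (y (φ l)) - g i j (y (φ l)))) ≤ 0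
    · -- Case A : obstacle active in the limit
      have hex2 : ∃ᶠ l in atTop, ∃ j : {j : Fin m // j ≠ i},
          vseq (φ l) i (y (φ l)) + g i j (y (φ l)) ≤ vseq (φ l - 1) j (y (φ l)) := by
        refine hcase.mono fun l hl => ?_
        obtain ⟨j₀, hj₀⟩ := Finite.exists_max (fun j : {j : Fin m // j ≠ i} =>
          vseq (φ l - 1) j (y (φ l)) - g i j (y (φ l)))
        exact ⟨j₀, by linarith [ciSup_le hj₀]⟩
      have hjfreq : ∃ j : {j : Fin m // j ≠ i}, ∃ᶠ l in atTop,
          vseq (φ l) i (y (φ l)) + g i j (y (φ l)) ≤ vseq (φ l - 1) j (y (φ l)) := by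
        by_contra hno
        push_neg at hno
        have hall : ∀ᶠ l in atTop, ∀ j : {j : Fin m // j ≠ i},
            ¬ (vseq (φ l) i (y (φ l)) + g i j (y (φ l)) ≤ vseq (φ l - 1) j (y (φ l))) :=
          eventually_all.mpr fun j => (hno j).mono fun l h => by simpa using h
        obtain ⟨l, ⟨j, hj⟩, hl⟩ := (hex2.and_eventually hall).exists
        exact hl j hj
      obtain ⟨j₀, hfr2⟩ := hjfreq
      obtain ⟨χ, hχ, hχall⟩ := extraction_of_frequently_atTop hfr2
      have hχt : Tendsto χ atTop atTop := hχ.tendsto_atTop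
      have hL1 : Tendsto (fun l' => vseq (φ (χ l')) i (y (φ (χ l'))) + g i j₀ (y (φ (χ l'))))
          atTop (nhds (W i x + g i j₀ x)) :=
        (hA'tend.comp hχt).add (((hgc i j₀).tendsto x).comp (hTY.comp hχt))
      have hL2 : Tendsto (fun l' => vseq (φ (χ l') - 1) j₀ (y (φ (χ l')))) atTop
          (nhds (β j₀)) := (tendsto_pi_nhds.mp hTU j₀).comp hχt
      have hkey := le_of_tendsto_of_tendsto' hL1 hL2 hχall
      have h6 : W j₀ x - g i (j₀ : Fin m) x ≤ obstacle g W i x := by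
        unfold obstacle
        exact le_ciSup (f := fun j : {j : Fin m // j ≠ i} => W j x - g i j x)
          ((Set.finite_range _).bddAbove) j₀
      have h7 : W i x - obstacle g W i x ≤ 0 := by
        have h5 := hβle j₀
        linarith
      have h8 : (0:ℝ) ≤ ε₀ * (2 * T + 1) := by nlinarith
      exact ((min_le_left _ _).trans h7).trans h8
    · -- Case B : PDE inequality passes to the limit
      rw [Filter.not_frequently] at hcase
      have hev1 : ∀ᶠ l in atTop, 1 ≤ φ l := hφatTop.eventually_ge_atTop 1
      have hev2 : ∀ᶠ l in atTop, dist (y (φ l)) x < δ :=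
        hTY.eventually (Metric.eventually_nhds_iff.mpr ⟨δ, hδpos, fun _ h => h⟩)
      have hevE : ∀ᶠ l in atTop,
          r * vseq (φ l) i (y (φ l))
            - dotp (b (y (φ l))) (q + X'.mulVec (y (φ l) - x))
            - (1/2) * Matrix.trace (σ (y (φ l)) * (σ (y (φ l)))ᵀ * X')
            - f i (y (φ l)) (Function.update (fun j => vseq (φ l - 1) j (y (φ l))) i
                (vseq (φ l) i (y (φ l))))
              ((σ (y (φ l)))ᵀ.mulVec (q + X'.mulVec (y (φ l) - x))) ≤ 0 := by
        filter_upwards [hcase, hev1, hev2] with l hP hn1 hdist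
        have hjet_l : InSuperjet (vseq (φ l) i) (y (φ l))
            (q + X'.mulVec (y (φ l) - x)) X' := by
          refine ⟨hX'symm, fun ε hε => ?_⟩
          have hball : ∀ᶠ z in nhds (y (φ l)), dist z (y (φ l)) < δ - dist (y (φ l)) x :=
            Metric.eventually_nhds_iff.mpr ⟨δ - dist (y (φ l)) x, by linarith, fun _ h => h⟩
          filter_upwards [hball] with z hz
          have hzK : z ∈ K := by
            rw [hK, Metric.mem_closedBall]
            calc dist z x ≤ dist z (y (φ l)) + dist (y (φ l)) x := dist_triangle _ _ _
              _ ≤ δ := by linarith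
          have hmax := hymax (φ l) z hzK
          have hshift := psi_shift' hX'symm q x (y (φ l)) z (W i x)
          have hψz : ψ z = W i x + dotp q (z - x) + (1/2) * quadForm X' (z - x) := by
            simp only [hψ]
          have hψyl : ψ (y (φ l)) = W i x + dotp q (y (φ l) - x)
              + (1/2) * quadForm X' (y (φ l) - x) := by
            simp only [hψ]
          have hε2 : 0 ≤ ε * eucNorm (z - y (φ l)) ^ 2 :=
            mul_nonneg hε.le (sq_nonneg _)
          rw [hψz, hψyl] at hmax
          linarith
        have hmin := hsubn (φ l) hn1 i (y (φ l)) (q + X'.mulVec (y (φ l) - x)) X' hjet_l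
        have hfirst := not_le.mp hP
        by_contra hgoal
        exact absurd hmin (not_le.mpr (lt_min hfirst (not_le.mp hgoal)))
      -- continuity of the whole expression
      have hqv : Continuous fun z : Vec k => q + X'.mulVec (z - x) :=
        continuous_const.add (continuous_const.matrix_mulVec (continuous_id.sub continuous_const))
      have hΦcont : Continuous (fun p : Vec k × ℝ × (Fin m → ℝ) =>
          r * p.2.1 - dotp (b p.1) (q + X'.mulVec (p.1 - x))
            - (1/2) * Matrix.trace (σ p.1 * (σ p.1)ᵀ * X')
            - f i p.1 (Function.update p.2.2 i p.2.1)
                ((σ p.1)ᵀ.mulVec (q + X'.mulVec (p.1 - x)))) := by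
        have hdotc : Continuous fun p : Vec k × ℝ × (Fin m → ℝ) =>
            dotp (b p.1) (q + X'.mulVec (p.1 - x)) := by
          refine continuous_finset_sum _ fun t _ => ?_
          exact ((continuous_apply t).comp (hbcont.comp continuous_fst)).mul
            ((continuous_apply t).comp (hqv.comp continuous_fst))
        have htr : Continuous fun p : Vec k × ℝ × (Fin m → ℝ) =>
            Matrix.trace (σ p.1 * (σ p.1)ᵀ * X') := by
          have hs1 : Continuous fun p : Vec k × ℝ × (Fin m → ℝ) => σ p.1 :=
            hscont.comp continuous_fst
          exact ((hs1.matrix_mul hs1.matrix_transpose).matrix_mul continuous_const).matrix_trace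
        have hupd : Continuous fun p : Vec k × ℝ × (Fin m → ℝ) =>
            Function.update p.2.2 i p.2.1 := by
          refine continuous_pi fun j => ?_
          by_cases hj : j = i
          · subst hj
            simp only [Function.update_self]
            exact continuous_fst.comp continuous_snd
          · simp only [Function.update_apply, if_neg hj]
            exact (continuous_apply j).comp (continuous_snd.comp continuous_snd)
        have hmv : Continuous fun p : Vec k × ℝ × (Fin m → ℝ) =>
            (σ p.1)ᵀ.mulVec (q + X'.mulVec (p.1 - x)) :=
          ((hscont.comp continuous_fst).matrix_transpose).matrix_mulVec
            (hqv.comp continuous_fst)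
        have hfcomp : Continuous fun p : Vec k × ℝ × (Fin m → ℝ) =>
            f i p.1 (Function.update p.2.2 i p.2.1)
              ((σ p.1)ᵀ.mulVec (q + X'.mulVec (p.1 - x))) :=
          (hfc i).comp (continuous_fst.prodMk (hupd.prodMk hmv))
        exact (((continuous_const.mul (continuous_fst.comp continuous_snd)).sub hdotc).sub
          (continuous_const.mul htr)).sub hfcomp
      have hPt : Tendsto (fun l => ((y (φ l) : Vec k), (vseq (φ l) i (y (φ l)) : ℝ),
          (fun j => vseq (φ l - 1) j (y (φ l)) : Fin m → ℝ))) atTop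
          (nhds (x, W i x, β)) := by
        have h := hTY.prodMk (hA'tend.prodMk hTU)
        rw [← nhds_prod_eq, ← nhds_prod_eq] at h
        exact h
      have hEt := (hΦcont.tendsto (x, W i x, β)).comp hPt
      have hE0' := le_of_tendsto hEt hevE
      have hE0 : r * W i x - dotp (b x) q - (1/2) * Matrix.trace (σ x * (σ x)ᵀ * X')
          - f i x (Function.update β i (W i x)) ((σ x)ᵀ.mulVec q) ≤ 0 := by
        simpa [sub_self, Matrix.mulVec_zero, add_zero] using hE0'
      have htr2 : Matrix.trace (σ x * (σ x)ᵀ * X')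
          = Matrix.trace (σ x * (σ x)ᵀ * X) + (4 * ε₀) * T := by
        rw [hX', trace_mul_add_smul_one, ← hT]
      have hfmle : f i x (Function.update β i (W i x)) ((σ x)ᵀ.mulVec q)
          ≤ f i x (fun j => W j x) ((σ x)ᵀ.mulVec q) := by
        refine update_mono_le (F := fun v => f i x v ((σ x)ᵀ.mulVec q)) (i := i)
          (fun j hj y' t t' ht => hfmono i j hj x ((σ x)ᵀ.mulVec q) y' t t' ht) ?_ ?_
        · intro j
          by_cases hj : j = i
          · subst hj; simp [Function.update_self]
          · rw [Function.update_of_ne hj]; exact hβle j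
        · simp [Function.update_self]
      have hham : ham r b σ f W i x q X ≤ ε₀ * (2 * T + 1) := by
        unfold ham
        nlinarith [hE0, htr2, hfmle, hT0, hε₀]
      exact (min_le_right _ _).trans hham
  by_contra hcon
  push_neg at hcon
  set mm := min (W i x - obstacle g W i x) (ham r b σ f W i x q X) with hmm
  have hs : (0:ℝ) < 2 * T + 1 := by linarith
  have h1 := main (mm / (2 * (2 * T + 1))) (by positivity)
  have h2 : mm / (2 * (2 * T + 1)) * (2 * T + 1) = mm / 2 := by field_simp
  rw [h2] at h1
  linarith
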